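/- Let s ≥ 6, A = {0 = a_1, ..., a_s} ⊆ [0, N-1] with gcd(a_2,...,a_s) = 1, and let x_1, ..., x_s be integers such that whenever a_j - a_i = a_r - a_t one has x_j - x_i = x_r - x_t. If |A+A| < (5/2)s, then there exist integers x, y with x_i = a_i·x + y for every i. -/

import Mathlib

open Pointwise

namespace FreimanAux

/-- cross product of two planar vectors -/
def cross (d e : ℤ × ℤ) : ℤ := d.1 * e.2 - d.2 * e.1

/-- ℓ¹ norm -/
def Nn (d : ℤ × ℤ) : ℤ := |d.1| + |d.2|

/-- direction lies in the lex-negative half plane -/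
def Half (d : ℤ × ℤ) : Prop := d.1 < 0 ∨ (d.1 = 0 ∧ d.2 < 0)

/-- the set lies on a line -/
def Col (B : Finset (ℤ × ℤ)) : Prop :=
  ∃ p q r : ℤ, (p ≠ 0 ∨ q ≠ 0) ∧ ∀ b ∈ B, p * b.1 + q * b.2 = r

lemma cross_add_right (m e e' : ℤ × ℤ) :
    cross m (e + e') = cross m e + cross m e' := by
  simp [cross, Prod.fst_add, Prod.snd_add]; ring

lemma cross_self (m : ℤ × ℤ) : cross m m = 0 := by simp [cross]; ring

lemma half_ne_zero {d : ℤ × ℤ} (h : Half d) : d ≠ 0 := by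
  rcases h with h | ⟨h1, h2⟩ <;> intro he <;>
    simp [Prod.ext_iff] at he <;> omega

lemma nn_pos {d : ℤ × ℤ} (h : Half d) : 0 < Nn d := by
  have h3 : 0 ≤ |d.1| := abs_nonneg _
  have h4 : 0 ≤ |d.2| := abs_nonneg _
  unfold Nn
  rcases h with h | ⟨h1, h2⟩
  · have : 0 < |d.1| := abs_pos.mpr h.ne
    omega
  · have : 0 < |d.2| := abs_pos.mpr h2.ne
    omega

/-- transfer identity: if `m ∥ e` then crosses against any `f` are proportional. -/
lemma cross_transfer1 (m e f : ℤ × ℤ) (h : cross m e = 0) :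
    m.1 * cross e f = e.1 * cross m f := by
  have : m.1 * e.2 - m.2 * e.1 = 0 := h
  simp only [cross]
  linear_combination (-f.1) * this

lemma cross_transfer2 (m e f : ℤ × ℤ) (h : cross m e = 0) :
    m.2 * cross e f = e.2 * cross m f := by
  have : m.1 * e.2 - m.2 * e.1 = 0 := h
  simp only [cross]
  linear_combination (-f.2) * this

lemma parallel_of_parallel {m e e' : ℤ × ℤ} (hm : Half m)
    (h1 : cross m e = 0) (h2 : cross m e' = 0) : cross e e' = 0 := by
  rcases hm with hm1 | ⟨hm1, hm2⟩
  · have := cross_transfer1 m e e' h1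
    rw [h2, mul_zero] at this
    exact (mul_eq_zero.1 this).resolve_left (by omega)
  · have := cross_transfer2 m e e' h1
    rw [h2, mul_zero] at this
    exact (mul_eq_zero.1 this).resolve_left (by omega)

lemma half_signs {e e' : ℤ × ℤ} (he : Half e) (he' : Half e')
    (h : cross e e' = 0) : 0 ≤ e.2 * e'.2 := by
  have hc : e.1 * e'.2 - e.2 * e'.1 = 0 := h
  rcases he with h1 | ⟨h1, h2⟩ <;> rcases he' with h1' | ⟨h1', h2'⟩
  · have hp : 0 < e.1 * e'.1 := mul_pos_of_neg_of_neg h1 h1'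
    have key : e.2 * e'.2 * (e.1 * e'.1) = (e.1 * e'.2) ^ 2 := by
      linear_combination (-(e.1 * e'.2)) * hc
    nlinarith [sq_nonneg (e.1 * e'.2), key, hp]
  · exfalso
    have hz : e.2 * e'.1 = 0 := by rw [h1']; ring
    nlinarith [mul_pos_of_neg_of_neg h1 h2']
  · exfalso
    have hz : e.1 * e'.2 = 0 := by rw [h1]; ring
    nlinarith [mul_pos_of_neg_of_neg h2 h1']
  · exact (mul_pos_of_neg_of_neg h2 h2').le

lemma half_fst_nonpos {e : ℤ × ℤ} (he : Half e) : e.1 ≤ 0 := by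
  rcases he with h | ⟨h, _⟩ <;> omega

lemma nn_add_of_parallel {e e' : ℤ × ℤ} (he : Half e) (he' : Half e')
    (h : cross e e' = 0) : Nn (e + e') = Nn e + Nn e' := by
  have h1 := half_fst_nonpos he
  have h1' := half_fst_nonpos he'
  have hs := half_signs he he' h
  have ha : |e.1 + e'.1| = |e.1| + |e'.1| := by
    rw [abs_of_nonpos h1, abs_of_nonpos h1', abs_of_nonpos (by omega)]; ring
  have hb : |e.2 + e'.2| = |e.2| + |e'.2| := by
    rcases lt_trichotomy e.2 0 with h2 | h2 | h2
    · have : e'.2 ≤ 0 := by nlinarith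
      rw [abs_of_nonpos h2.le, abs_of_nonpos this, abs_of_nonpos (by omega)]; ring
    · rw [h2]; simp
    · have : 0 ≤ e'.2 := by nlinarith
      rw [abs_of_nonneg h2.le, abs_of_nonneg this, abs_of_nonneg (by omega)]
  simp only [Nn, Prod.fst_add, Prod.snd_add, ha, hb]; ring



lemma col_of_card_le_two {B : Finset (ℤ × ℤ)} (h : B.card ≤ 2) : Col B := by
  interval_cases hc : B.card
  · rw [Finset.card_eq_zero] at hc
    exact ⟨1, 0, 0, Or.inl one_ne_zero, by simp [hc]⟩
  · rw [Finset.card_eq_one] at hc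
    obtain ⟨b, rfl⟩ := hc
    exact ⟨0, 1, b.2, Or.inr one_ne_zero, by simp⟩
  · rw [Finset.card_eq_two] at hc
    obtain ⟨b, c, hbc, rfl⟩ := hc
    refine ⟨c.2 - b.2, b.1 - c.1, (c.2 - b.2) * b.1 + (b.1 - c.1) * b.2, ?_, ?_⟩
    · by_contra hpq
      push_neg at hpq
      exact hbc (Prod.ext (by linarith [hpq.2]) (by linarith [hpq.1]))
    · intro z hz
      simp only [Finset.mem_insert, Finset.mem_singleton] at hz
      rcases hz with rfl | rfl
      · rfl
      · ring

/-- the lex-property of a maximal element -/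
def LexMax (B : Finset (ℤ × ℤ)) (v : ℤ × ℤ) : Prop :=
  ∀ b ∈ B, b.1 ≤ v.1 ∧ (b.1 = v.1 → b.2 ≤ v.2)

lemma exists_lexmax (B : Finset (ℤ × ℤ)) (hB : B.Nonempty) :
    ∃ v ∈ B, LexMax B v := by
  obtain ⟨v1, hv1mem, hv1max⟩ :=
    B.exists_max_image Prod.fst hB
  set F := B.filter (fun b => b.1 = v1.1) with hF
  have hFne : F.Nonempty := ⟨v1, by simp [hF, hv1mem]⟩
  obtain ⟨v, hvF, hvmax⟩ := F.exists_max_image Prod.snd hFne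
  simp only [hF, Finset.mem_filter] at hvF
  refine ⟨v, hvF.1, fun b hb => ⟨hvF.2 ▸ hv1max b hb, fun hb1 => ?_⟩⟩
  exact hvmax b (by simp [hF, hb, hb1, hvF.2])

lemma lexmax_unique {B : Finset (ℤ × ℤ)} {v b : ℤ × ℤ} (hv : LexMax B v)
    (hvB : v ∈ B) (hb : b ∈ B) (h1 : b.1 = v.1) (h2 : v.2 ≤ b.2) : b = v := by
  have := hv b hb
  exact Prod.ext h1 (le_antisymm ((this.2 h1)) h2)

/-- `2v` is not a sum of two elements, one of which differs from the lex max -/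
lemma two_lexmax {B : Finset (ℤ × ℤ)} {v c c' : ℤ × ℤ} (hv : LexMax B v) (hvB : v ∈ B)
    (hc : c ∈ B) (hc' : c' ∈ B) (hne : c ≠ v) : c + c' ≠ v + v := by
  intro he
  have h1 := hv c hc
  have h2 := hv c' hc'
  have e1 : c.1 + c'.1 = v.1 + v.1 := congrArg Prod.fst he
  have e2 : c.2 + c'.2 = v.2 + v.2 := congrArg Prod.snd he
  have hc1 : c.1 = v.1 := by omega
  have hc'1 : c'.1 = v.1 := by omega
  have : c.2 < v.2 := by
    rcases lt_or_ge c.2 v.2 with h | h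
    · exact h
    · exact absurd (lexmax_unique hv hvB hc hc1 h) hne
  have := h2.2 hc'1
  omega

/-- `v + u` is not a sum of two elements of `B.erase v`, where `u` is the lex max
of `B.erase v`. -/
lemma lexmax_snd {B : Finset (ℤ × ℤ)} {v u c c' : ℤ × ℤ} (hv : LexMax B v) (hvB : v ∈ B)
    (hu : LexMax (B.erase v) u) (huB : u ∈ B.erase v)
    (hc : c ∈ B.erase v) (hc' : c' ∈ B.erase v) : c + c' ≠ v + u := by
  intro he
  have hune : u ≠ v := Finset.ne_of_mem_erase huB
  have hu1 := hv u (Finset.mem_of_mem_erase huB)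
  have h1 := hu c hc
  have h2 := hu c' hc'
  have e1 : c.1 + c'.1 = v.1 + u.1 := congrArg Prod.fst he
  have e2 : c.2 + c'.2 = v.2 + u.2 := congrArg Prod.snd he
  -- first coordinates
  have hv1 : v.1 = u.1 := by omega
  have hc1 : c.1 = u.1 := by omega
  have hc'1 : c'.1 = u.1 := by omega
  -- then v.2 > u.2
  have hvu2 : u.2 < v.2 := by
    rcases lt_or_ge u.2 v.2 with h | h
    · exact h
    · exact absurd (Prod.ext hv1.symm (le_antisymm (hu1.2 hv1.symm) h)) hune
  have := h1.2 hc1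
  have := h2.2 hc'1
  omega

/-- one-dimensional-style lower bound: `|C+C| ≥ 2|C| - 1`. -/
lemma cd_one_dim : ∀ (n : ℕ) (C : Finset (ℤ × ℤ)), C.card = n → C.Nonempty →
    2 * C.card ≤ (C + C).card + 1 := by
  intro n
  induction n using Nat.strong_induction_on with
  | _ n ih =>
    intro C hcard hne
    obtain ⟨v, hvC, hv⟩ := exists_lexmax C hne
    set C' := C.erase v with hC'
    rcases C'.eq_empty_or_nonempty with hC'e | hC'ne
    · -- C = {v}
      have : C = {v} := by
        apply Finset.eq_singleton_iff_unique_mem.2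
        exact ⟨hvC, fun b hb => by
          by_contra hbv
          exact Finset.notMem_empty b (hC'e ▸ Finset.mem_erase_of_ne_of_mem hbv hb)⟩
      subst this
      simp
    · obtain ⟨u, huC', hu⟩ := exists_lexmax C' hC'ne
      have hsub : insert (v + v) (insert (v + u) (C' + C')) ⊆ C + C := by
        intro z hz
        simp only [Finset.mem_insert] at hz
        rcases hz with rfl | rfl | hz
        · exact Finset.add_mem_add hvC hvC
        · exact Finset.add_mem_add hvC (Finset.mem_of_mem_erase huC')
        · exact Finset.add_subset_add (Finset.erase_subset v C) (Finset.erase_subset v C) hz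
      have hvu_ne : v + v ≠ v + u := by
        intro h
        exact (Finset.ne_of_mem_erase huC') (add_left_cancel h.symm)
      have hvv_nm : v + v ∉ insert (v + u) (C' + C') := by
        simp only [Finset.mem_insert]
        rintro (h | h)
        · exact hvu_ne h
        · obtain ⟨c, hc, c', hc', hcc⟩ := Finset.mem_add.1 h
          exact two_lexmax hv hvC (Finset.mem_of_mem_erase hc) (Finset.mem_of_mem_erase hc')
            (Finset.ne_of_mem_erase hc) hcc
      have hvu_nm : v + u ∉ C' + C' := by
        intro h
        obtain ⟨c, hc, c', hc', hcc⟩ := Finset.mem_add.1 h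
        exact lexmax_snd hv hvC hu huC' hc hc' hcc
      have hcard2 : (C' + C').card + 2 ≤ (C + C).card := by
        have h1 := Finset.card_le_card hsub
        rw [Finset.card_insert_of_notMem hvv_nm, Finset.card_insert_of_notMem hvu_nm] at h1
        omega
      have hC'card : C'.card = n - 1 := by rw [hC', Finset.card_erase_of_mem hvC, hcard]
      have hn1 : 1 ≤ n := by rw [← hcard]; exact Finset.card_pos.2 hne
      have := ih (n - 1) (by omega) C' hC'card hC'ne
      omega



lemma cross_jacobi1 (d e f : ℤ × ℤ) :
    e.1 * cross d f = d.1 * cross e f + f.1 * cross d e := by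
  simp only [cross]; ring


/-- a parallel mate of `m` in the half plane: sign data -/
lemma par_coeffs {m a : ℤ × ℤ} (hm : Half m) (ha : Half a) (h : cross m a = 0) (d : ℤ × ℤ) :
    ∃ cm ca : ℤ, cm < 0 ∧ ca < 0 ∧ cm * cross a d = ca * cross m d := by
  rcases hm with h1 | ⟨h1, h2⟩
  · have ha1 : a.1 < 0 := by
      rcases ha with g | ⟨g1, g2⟩
      · exact g
      · exfalso
        have hz : m.1 * a.2 = 0 := by
          have h' : m.1 * a.2 - m.2 * a.1 = 0 := h
          rw [g1] at h'; linarith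
        have := (mul_eq_zero.1 hz).resolve_left h1.ne
        omega
    exact ⟨m.1, a.1, h1, ha1, cross_transfer1 m a d h⟩
  · have ha1 : a.1 = 0 := by
      have h' : m.1 * a.2 - m.2 * a.1 = 0 := h
      rw [h1] at h'
      have hz : m.2 * a.1 = 0 := by linarith
      exact (mul_eq_zero.1 hz).resolve_left h2.ne
    have ha2 : a.2 < 0 := by
      rcases ha with g | ⟨g1, g2⟩
      · omega
      · exact g2
    exact ⟨m.2, a.2, h2, ha2, cross_transfer2 m a d h⟩

lemma par_transfer {m a : ℤ × ℤ} (hm : Half m) (ha : Half a) (h : cross m a = 0) (d : ℤ × ℤ) :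
    (0 ≤ cross m d → 0 ≤ cross a d) ∧ (cross m d ≤ 0 → cross a d ≤ 0) ∧
      (cross a d = 0 → cross m d = 0) := by
  obtain ⟨cm, ca, hcm, hca, hkey⟩ := par_coeffs hm ha h d
  refine ⟨fun hx => ?_, fun hx => ?_, fun hx => ?_⟩
  · nlinarith [hkey]
  · nlinarith [hkey]
  · have : ca * cross m d = 0 := by rw [← hkey, hx, mul_zero]
    exact (mul_eq_zero.1 this).resolve_left hca.ne

lemma min_step {m a d : ℤ × ℤ} (ha : Half a) (hm : Half m) (hd : Half d)
    (h1 : cross m a < 0) (h2 : 0 ≤ cross m d) : 0 < cross a d := by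
  rcases hm with hm1 | ⟨hm1, hm2⟩
  · have key := cross_jacobi1 a m d
    have hca : 0 < cross a m := by
      have : cross a m = -cross m a := by simp only [cross]; ring
      omega
    have ha1 := half_fst_nonpos ha
    have hd1 := half_fst_nonpos hd
    have hnn : 0 ≤ cross a d := by nlinarith [key]
    rcases hnn.lt_or_eq with h | h
    · exact h
    · exfalso
      -- both terms vanish
      have t1 : a.1 * cross m d ≤ 0 := mul_nonpos_of_nonpos_of_nonneg ha1 h2
      have t2 : d.1 * cross a m ≤ 0 := mul_nonpos_of_nonpos_of_nonneg hd1 hca.le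
      have hz : a.1 * cross m d + d.1 * cross a m = 0 := by
        rw [← key, ← h, mul_zero]
      have t2' : d.1 * cross a m = 0 := by omega
      have hd10 : d.1 = 0 := (mul_eq_zero.1 t2').resolve_right hca.ne'
      have hd2 : d.2 < 0 := by rcases hd with g | ⟨g1, g2⟩ <;> omega
      have hcad : cross a d = a.1 * d.2 := by simp only [cross, hd10]; ring
      have ha10 : a.1 = 0 := by
        have : a.1 * d.2 = 0 := by rw [← hcad, ← h]
        exact (mul_eq_zero.1 this).resolve_right hd2.ne
      have ha2 : a.2 < 0 := by rcases ha with g | ⟨g1, g2⟩ <;> omega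
      have : cross m a = m.1 * a.2 := by simp only [cross, ha10]; ring
      nlinarith [mul_pos_of_neg_of_neg hm1 ha2]
  · have ha1 : a.1 < 0 := by
      have : cross m a = -(m.2 * a.1) := by simp only [cross, hm1]; ring
      nlinarith [this]
    have hd10 : d.1 = 0 := by
      have hcmd : cross m d = -(m.2 * d.1) := by simp only [cross, hm1]; ring
      have hd1 := half_fst_nonpos hd
      nlinarith [hcmd]
    have hd2 : d.2 < 0 := by rcases hd with g | ⟨g1, g2⟩ <;> omega
    have : cross a d = a.1 * d.2 := by simp only [cross, hd10]; ring
    rw [this]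
    exact mul_pos_of_neg_of_neg ha1 hd2

lemma max_step {m a d : ℤ × ℤ} (ha : Half a) (hm : Half m) (hd : Half d)
    (h1 : 0 < cross m a) (h2 : cross m d ≤ 0) : cross a d < 0 := by
  rcases hm with hm1 | ⟨hm1, hm2⟩
  · have key := cross_jacobi1 a m d
    have hca : cross a m < 0 := by
      have : cross a m = -cross m a := by simp only [cross]; ring
      omega
    have ha1 := half_fst_nonpos ha
    have hd1 := half_fst_nonpos hd
    have hnp : cross a d ≤ 0 := by nlinarith [key]
    rcases hnp.lt_or_eq with h | h
    · exact h
    · exfalso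
      have t1 : 0 ≤ a.1 * cross m d := by nlinarith [ha1, h2]
      have t2 : 0 ≤ d.1 * cross a m := by nlinarith [hd1, hca.le]
      have hz : a.1 * cross m d + d.1 * cross a m = 0 := by
        rw [← key, h, mul_zero]
      have t2' : d.1 * cross a m = 0 := by omega
      have hd10 : d.1 = 0 := (mul_eq_zero.1 t2').resolve_right hca.ne
      have hd2 : d.2 < 0 := by rcases hd with g | ⟨g1, g2⟩ <;> omega
      have : cross m d = m.1 * d.2 := by simp only [cross, hd10]; ring
      nlinarith [mul_pos_of_neg_of_neg hm1 hd2]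
  · exfalso
    have ha1 := half_fst_nonpos ha
    have : cross m a = -(m.2 * a.1) := by simp only [cross, hm1]; ring
    nlinarith [this]

lemma exists_ang_min (v : ℤ × ℤ) : ∀ (S : Finset (ℤ × ℤ)), S.Nonempty →
    (∀ c ∈ S, Half (c - v)) →
    ∃ u ∈ S, ∀ c ∈ S, 0 ≤ cross (u - v) (c - v) ∧
      (cross (u - v) (c - v) = 0 → Nn (u - v) ≤ Nn (c - v)) := by
  intro S
  induction S using Finset.cons_induction with
  | empty => intro h; exact absurd h (by simp)
  | cons a s ha ih =>
    intro _ hH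
    have hHa : Half (a - v) := hH a (Finset.mem_cons_self a s)
    rcases s.eq_empty_or_nonempty with rfl | hs
    · refine ⟨a, Finset.mem_cons_self a _, ?_⟩
      intro c hc
      have : c = a := by simpa using hc
      subst this
      exact ⟨(cross_self _).ge, fun _ => le_refl _⟩
    · obtain ⟨m, hms, hm⟩ := ih hs (fun c hc => hH c (Finset.mem_cons_of_mem hc))
      have hHm : Half (m - v) := hH m (Finset.mem_cons_of_mem hms)
      rcases lt_trichotomy (cross (m - v) (a - v)) 0 with hlt | heq | hgt
      · refine ⟨a, Finset.mem_cons_self a s, ?_⟩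
        intro c hc
        rcases Finset.mem_cons.1 hc with rfl | hcs
        · exact ⟨(cross_self _).ge, fun _ => le_refl _⟩
        · have hHc := hH c (Finset.mem_cons_of_mem hcs)
          have h0 := (hm c hcs).1
          have hpos := min_step hHa hHm hHc hlt h0
          exact ⟨hpos.le, fun h => absurd h hpos.ne'⟩
      · by_cases hN : Nn (m - v) ≤ Nn (a - v)
        · refine ⟨m, Finset.mem_cons_of_mem hms, ?_⟩
          intro c hc
          rcases Finset.mem_cons.1 hc with rfl | hcs
          · exact ⟨heq.ge, fun _ => hN⟩
          · exact hm c hcs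
        · push_neg at hN
          refine ⟨a, Finset.mem_cons_self a s, ?_⟩
          intro c hc
          rcases Finset.mem_cons.1 hc with rfl | hcs
          · exact ⟨(cross_self _).ge, fun _ => le_refl _⟩
          · obtain ⟨h1, h2⟩ := hm c hcs
            obtain ⟨t1, _, t3⟩ := par_transfer hHm hHa heq (c - v)
            exact ⟨t1 h1, fun h0 => le_trans hN.le (h2 (t3 h0))⟩
      · refine ⟨m, Finset.mem_cons_of_mem hms, ?_⟩
        intro c hc
        rcases Finset.mem_cons.1 hc with rfl | hcs
        · exact ⟨hgt.le, fun h => absurd h hgt.ne'⟩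
        · exact hm c hcs

lemma exists_ang_max (v : ℤ × ℤ) : ∀ (S : Finset (ℤ × ℤ)), S.Nonempty →
    (∀ c ∈ S, Half (c - v)) →
    ∃ u ∈ S, ∀ c ∈ S, cross (u - v) (c - v) ≤ 0 ∧
      (cross (u - v) (c - v) = 0 → Nn (u - v) ≤ Nn (c - v)) := by
  intro S
  induction S using Finset.cons_induction with
  | empty => intro h; exact absurd h (by simp)
  | cons a s ha ih =>
    intro _ hH
    have hHa : Half (a - v) := hH a (Finset.mem_cons_self a s)
    rcases s.eq_empty_or_nonempty with rfl | hs
    · refine ⟨a, Finset.mem_cons_self a _, ?_⟩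
      intro c hc
      have : c = a := by simpa using hc
      subst this
      exact ⟨(cross_self _).le, fun _ => le_refl _⟩
    · obtain ⟨m, hms, hm⟩ := ih hs (fun c hc => hH c (Finset.mem_cons_of_mem hc))
      have hHm : Half (m - v) := hH m (Finset.mem_cons_of_mem hms)
      rcases lt_trichotomy (cross (m - v) (a - v)) 0 with hlt | heq | hgt
      · refine ⟨m, Finset.mem_cons_of_mem hms, ?_⟩
        intro c hc
        rcases Finset.mem_cons.1 hc with rfl | hcs
        · exact ⟨hlt.le, fun h => absurd h hlt.ne⟩
        · exact hm c hcs
      · by_cases hN : Nn (m - v) ≤ Nn (a - v)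
        · refine ⟨m, Finset.mem_cons_of_mem hms, ?_⟩
          intro c hc
          rcases Finset.mem_cons.1 hc with rfl | hcs
          · exact ⟨heq.le, fun _ => hN⟩
          · exact hm c hcs
        · push_neg at hN
          refine ⟨a, Finset.mem_cons_self a s, ?_⟩
          intro c hc
          rcases Finset.mem_cons.1 hc with rfl | hcs
          · exact ⟨(cross_self _).le, fun _ => le_refl _⟩
          · obtain ⟨h1, h2⟩ := hm c hcs
            obtain ⟨_, t2, t3⟩ := par_transfer hHm hHa heq (c - v)
            exact ⟨t2 h1, fun h0 => le_trans hN.le (h2 (t3 h0))⟩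
      · refine ⟨a, Finset.mem_cons_self a s, ?_⟩
        intro c hc
        rcases Finset.mem_cons.1 hc with rfl | hcs
        · exact ⟨(cross_self _).le, fun _ => le_refl _⟩
        · have hHc := hH c (Finset.mem_cons_of_mem hcs)
          have h0 := (hm c hcs).1
          have hneg := max_step hHa hHm hHc hgt h0
          exact ⟨hneg.le, fun h => absurd h hneg.ne⟩


lemma sum_shift {v u c c' : ℤ × ℤ} (hsum : c + c' = v + u) :
    (c - v) + (c' - v) = u - v := by
  have e1 := congrArg Prod.fst hsum
  have e2 := congrArg Prod.snd hsum
  simp only [Prod.fst_add, Prod.snd_add] at e1 e2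
  apply Prod.ext <;>
    simp only [Prod.fst_add, Prod.fst_sub, Prod.snd_add, Prod.snd_sub] <;> omega

lemma ray_contra {v u c c' : ℤ × ℤ} (hu : Half (u - v)) (hc : Half (c - v))
    (hc' : Half (c' - v)) (h1 : cross (u - v) (c - v) = 0)
    (h2 : cross (u - v) (c' - v) = 0) (hsum : c + c' = v + u)
    (hN : Nn (u - v) ≤ Nn (c - v)) : False := by
  have hsum' := sum_shift hsum
  have hpar : cross (c - v) (c' - v) = 0 := parallel_of_parallel hu h1 h2
  have hNadd := nn_add_of_parallel hc hc' hpar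
  rw [hsum'] at hNadd
  have := nn_pos hc'
  omega

lemma ang_new_min {v u : ℤ × ℤ} {A' : Finset (ℤ × ℤ)} (hH : ∀ c ∈ A', Half (c - v))
    (huA : u ∈ A')
    (hu : ∀ c ∈ A', 0 ≤ cross (u - v) (c - v) ∧
      (cross (u - v) (c - v) = 0 → Nn (u - v) ≤ Nn (c - v))) :
    ∀ c ∈ A', ∀ c' ∈ A', c + c' ≠ v + u := by
  intro c hc c' hc' hsum
  have hsum' := sum_shift hsum
  have hkey := cross_add_right (u - v) (c - v) (c' - v)
  rw [hsum', cross_self] at hkey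
  have g1 := (hu c hc).1
  have g2 := (hu c' hc').1
  have h1 : cross (u - v) (c - v) = 0 := by omega
  have h2 : cross (u - v) (c' - v) = 0 := by omega
  exact ray_contra (hH u huA) (hH c hc) (hH c' hc') h1 h2 hsum ((hu c hc).2 h1)

lemma ang_new_max {v u : ℤ × ℤ} {A' : Finset (ℤ × ℤ)} (hH : ∀ c ∈ A', Half (c - v))
    (huA : u ∈ A')
    (hu : ∀ c ∈ A', cross (u - v) (c - v) ≤ 0 ∧
      (cross (u - v) (c - v) = 0 → Nn (u - v) ≤ Nn (c - v))) :
    ∀ c ∈ A', ∀ c' ∈ A', c + c' ≠ v + u := by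
  intro c hc c' hc' hsum
  have hsum' := sum_shift hsum
  have hkey := cross_add_right (u - v) (c - v) (c' - v)
  rw [hsum', cross_self] at hkey
  have g1 := (hu c hc).1
  have g2 := (hu c' hc').1
  have h1 : cross (u - v) (c - v) = 0 := by omega
  have h2 : cross (u - v) (c' - v) = 0 := by omega
  exact ray_contra (hH u huA) (hH c hc) (hH c' hc') h1 h2 hsum ((hu c hc).2 h1)

lemma col_of_line {v m : ℤ × ℤ} {A' : Finset (ℤ × ℤ)} (hm : Half m)
    (h : ∀ c ∈ A', cross m (c - v) = 0) : Col A' := by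
  refine ⟨m.2, -m.1, m.2 * v.1 - m.1 * v.2, ?_, ?_⟩
  · rcases hm with h1 | ⟨h1, h2⟩
    · exact Or.inr (by omega)
    · exact Or.inl (by omega)
  · intro c hc
    have hc0 : m.1 * (c.2 - v.2) - m.2 * (c.1 - v.1) = 0 := h c hc
    linarith [hc0]

lemma planar (B : Finset (ℤ × ℤ)) : ¬ Col B → 3 * B.card ≤ (B + B).card + 3 := by
  induction B using Finset.strongInduction with
  | _ B ih =>
    intro hCol
    have hc3 : 3 ≤ B.card := by
      by_contra h
      exact hCol (col_of_card_le_two (by omega))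
    have hne : B.Nonempty := Finset.card_pos.1 (by omega)
    obtain ⟨v, hvB, hv⟩ := exists_lexmax B hne
    set A' := B.erase v with hA'def
    have hA'card : A'.card + 1 = B.card := by
      rw [hA'def, Finset.card_erase_of_mem hvB]
      omega
    have hA'ne : A'.Nonempty := Finset.card_pos.1 (by omega)
    have hsubsum : A' + A' ⊆ B + B :=
      Finset.add_subset_add (Finset.erase_subset _ _) (Finset.erase_subset _ _)
    by_cases hColA : Col A'
    · obtain ⟨p, q, r, hpq, hline⟩ := hColA
      have hvline : p * v.1 + q * v.2 ≠ r := by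
        intro hvl
        refine hCol ⟨p, q, r, hpq, fun b hb => ?_⟩
        rcases eq_or_ne b v with rfl | hbv
        · exact hvl
        · exact hline b (Finset.mem_erase_of_ne_of_mem hbv hb)
      set S2 := A'.image (fun c => v + c) with hS2def
      have hS2sub : S2 ⊆ B + B := by
        intro z hz
        obtain ⟨c, hc, rfl⟩ := Finset.mem_image.1 hz
        exact Finset.add_mem_add hvB (Finset.mem_of_mem_erase hc)
      have hS2card : S2.card = A'.card :=
        Finset.card_image_of_injective _ (add_right_injective v)
      have hval1 : ∀ z ∈ A' + A', p * z.1 + q * z.2 = 2 * r := by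
        intro z hz
        obtain ⟨c, hc, c', hc', rfl⟩ := Finset.mem_add.1 hz
        have h1 := hline c hc
        have h2 := hline c' hc'
        simp only [Prod.fst_add, Prod.snd_add]
        linear_combination h1 + h2
      have hval2 : ∀ z ∈ S2, p * z.1 + q * z.2 = (p * v.1 + q * v.2) + r := by
        intro z hz
        obtain ⟨c, hc, rfl⟩ := Finset.mem_image.1 hz
        have h1 := hline c hc
        simp only [Prod.fst_add, Prod.snd_add]
        linear_combination h1
      have d12 : Disjoint (A' + A') S2 := by
        rw [Finset.disjoint_left]
        intro z h1 h2
        have := hval1 z h1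
        have := hval2 z h2
        omega
      have d3 : v + v ∉ (A' + A') ∪ S2 := by
        intro hmem
        have hvv : p * (v + v).1 + q * (v + v).2 = 2 * (p * v.1 + q * v.2) := by
          simp only [Prod.fst_add, Prod.snd_add]
          ring
        rcases Finset.mem_union.1 hmem with h1 | h1
        · have := hval1 _ h1
          omega
        · have := hval2 _ h1
          omega
      have hsub : insert (v + v) ((A' + A') ∪ S2) ⊆ B + B := by
        intro z hz
        rcases Finset.mem_insert.1 hz with rfl | hz
        · exact Finset.add_mem_add hvB hvB
        · rcases Finset.mem_union.1 hz with h1 | h1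
          · exact hsubsum h1
          · exact hS2sub h1
      have hcards : (A' + A').card + S2.card + 1 ≤ (B + B).card := by
        have h1 := Finset.card_le_card hsub
        rw [Finset.card_insert_of_notMem d3, Finset.card_union_of_disjoint d12] at h1
        omega
      have hcd := cd_one_dim A'.card A' rfl hA'ne
      omega
    · have hIH := ih A' (Finset.erase_ssubset hvB) hColA
      have hHalf : ∀ c ∈ A', Half (c - v) := by
        intro c hc
        have hcv := Finset.ne_of_mem_erase hc
        have h1 := hv c (Finset.mem_of_mem_erase hc)
        simp only [Half, Prod.fst_sub, Prod.snd_sub]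
        rcases lt_or_eq_of_le h1.1 with h | h
        · exact Or.inl (by omega)
        · refine Or.inr ⟨by omega, ?_⟩
          have h2 := h1.2 h
          rcases lt_or_eq_of_le h2 with h3 | h3
          · omega
          · exact absurd (Prod.ext h h3) hcv
      obtain ⟨u₁, hu₁A, hu₁⟩ := exists_ang_min v A' hA'ne hHalf
      obtain ⟨u₂, hu₂A, hu₂⟩ := exists_ang_max v A' hA'ne hHalf
      have hne12 : u₁ ≠ u₂ := by
        intro heq
        subst heq
        refine hColA (col_of_line (v := v) (hHalf u₁ hu₁A) fun c hc => ?_)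
        have g1 := (hu₁ c hc).1
        have g2 := (hu₂ c hc).1
        omega
      have hnew1 := ang_new_min hHalf hu₁A hu₁
      have hnew2 := ang_new_max hHalf hu₂A hu₂
      have hvu₁ : v + u₁ ∉ A' + A' := by
        intro h
        obtain ⟨c, hc, c', hc', hcc⟩ := Finset.mem_add.1 h
        exact hnew1 c hc c' hc' hcc
      have hvu₂ : v + u₂ ∉ A' + A' := by
        intro h
        obtain ⟨c, hc, c', hc', hcc⟩ := Finset.mem_add.1 h
        exact hnew2 c hc c' hc' hcc
      have hvv : v + v ∉ A' + A' := by
        intro h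
        obtain ⟨c, hc, c', hc', hcc⟩ := Finset.mem_add.1 h
        exact two_lexmax hv hvB (Finset.mem_of_mem_erase hc) (Finset.mem_of_mem_erase hc')
          (Finset.ne_of_mem_erase hc) hcc
      have hd1 : v + v ≠ v + u₁ := fun h => Finset.ne_of_mem_erase hu₁A (add_left_cancel h.symm)
      have hd2 : v + v ≠ v + u₂ := fun h => Finset.ne_of_mem_erase hu₂A (add_left_cancel h.symm)
      have hd3 : v + u₁ ≠ v + u₂ := fun h => hne12 (add_left_cancel h)
      have hsub : insert (v + v) (insert (v + u₁) (insert (v + u₂) (A' + A'))) ⊆ B + B := by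
        intro z hz
        rcases Finset.mem_insert.1 hz with rfl | hz
        · exact Finset.add_mem_add hvB hvB
        rcases Finset.mem_insert.1 hz with rfl | hz
        · exact Finset.add_mem_add hvB (Finset.mem_of_mem_erase hu₁A)
        rcases Finset.mem_insert.1 hz with rfl | hz
        · exact Finset.add_mem_add hvB (Finset.mem_of_mem_erase hu₂A)
        · exact hsubsum hz
      have hcards : (A' + A').card + 3 ≤ (B + B).card := by
        have h1 := Finset.card_le_card hsub
        rw [Finset.card_insert_of_notMem (by simp [hd1, hd2, hvv]),
          Finset.card_insert_of_notMem (by simp [hd3, hvu₁]),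
          Finset.card_insert_of_notMem hvu₂] at h1
        omega
      omega

end FreimanAux

open FreimanAux in
theorem freiman_hom_is_affine (s : ℕ) (hs : 6 ≤ s) (N : ℕ)
    (a : ℕ → ℤ) (ha0 : a 0 = 0)
    (hrange : ∀ i < s, a i ∈ Finset.Icc (0 : ℤ) ((N : ℤ) - 1))
    (hinj : ∀ i < s, ∀ j < s, a i = a j → i = j)
    (hgcd : (Finset.range s).gcd a = 1)
    (x : ℕ → ℤ)
    (hfrei : ∀ i < s, ∀ j < s, ∀ r < s, ∀ t < s,
      a j - a i = a r - a t → x j - x i = x r - x t)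
    (A : Finset ℤ) (hA : A = (Finset.range s).image a)
    (hdbl : 2 * (A + A).card < 5 * s) :
    ∃ X Y : ℤ, ∀ i < s, x i = a i * X + Y := by
  classical
  set B : Finset (ℤ × ℤ) := (Finset.range s).image (fun i => (a i, x i)) with hBdef
  have hmemB : ∀ i < s, (a i, x i) ∈ B := fun i hi =>
    Finset.mem_image_of_mem _ (Finset.mem_range.2 hi)
  have hprojB : B.image Prod.fst = A := by
    rw [hA, hBdef, Finset.image_image]
    rfl
  have himg : (B + B).image Prod.fst = A + A := by
    have h := Finset.image_add (f := AddMonoidHom.fst ℤ ℤ) (s := B) (t := B)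
    simp only [AddMonoidHom.coe_fst] at h
    rw [h, hprojB]
  have hinjOn : Set.InjOn Prod.fst ((B + B : Finset (ℤ × ℤ)) : Set (ℤ × ℤ)) := by
    intro z hz w hw hzw
    rw [Finset.mem_coe] at hz hw
    obtain ⟨z1, hz1, z2, hz2, rfl⟩ := Finset.mem_add.1 hz
    obtain ⟨w1, hw1, w2, hw2, rfl⟩ := Finset.mem_add.1 hw
    obtain ⟨i, hi, rfl⟩ := Finset.mem_image.1 hz1
    obtain ⟨j, hj, rfl⟩ := Finset.mem_image.1 hz2
    obtain ⟨k, hk, rfl⟩ := Finset.mem_image.1 hw1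
    obtain ⟨l, hl, rfl⟩ := Finset.mem_image.1 hw2
    rw [Finset.mem_range] at hi hj hk hl
    simp only [Prod.fst_add] at hzw
    have hsnd : x i - x k = x l - x j := hfrei k hk i hi l hl j hj (by linarith)
    simp only [Prod.ext_iff, Prod.fst_add, Prod.snd_add]
    constructor
    · linarith
    · linarith
  have hcardsum : (A + A).card = (B + B).card := by
    rw [← himg]
    exact Finset.card_image_of_injOn hinjOn
  have hBcard : B.card = s := by
    rw [hBdef, Finset.card_image_of_injOn, Finset.card_range]
    intro i hi j hj hij
    rw [Finset.mem_coe, Finset.mem_range] at hi hj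
    exact hinj i hi j hj (congrArg Prod.fst hij)
  have hColB : Col B := by
    by_contra hnc
    have hpl := planar B hnc
    rw [hBcard] at hpl
    omega
  obtain ⟨p, q, r, hpq, hline⟩ := hColB
  have hlinei : ∀ i < s, p * a i + q * x i = r := fun i hi => hline _ (hmemB i hi)
  have h0s : 0 < s := by omega
  have h1s : 1 < s := by omega
  have hq : q ≠ 0 := by
    intro hq0
    subst hq0
    have hp : p ≠ 0 := hpq.resolve_right (by simp)
    have e0 := hlinei 0 h0s
    have e1 := hlinei 1 h1s
    rw [ha0] at e0
    have hr0 : r = 0 := by linarith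
    have ha1 : a 1 = 0 := by
      have : p * a 1 = 0 := by linarith
      exact (mul_eq_zero.1 this).resolve_left hp
    have := hinj 1 h1s 0 h0s (by rw [ha1, ha0])
    omega
  have hr : r = q * x 0 := by
    have := hlinei 0 h0s
    rw [ha0] at this
    linarith
  set g : ℤ := (Int.gcd p q : ℤ) with hgdef
  have hgne : g ≠ 0 := by
    simp only [hgdef, ne_eq, Int.natCast_eq_zero]
    intro h
    exact hq (Int.gcd_eq_zero_iff.1 h).2
  have hgpos : 0 < Int.gcd p q := Nat.pos_of_ne_zero (by
    intro h
    exact hq (Int.gcd_eq_zero_iff.1 h).2)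
  set p' : ℤ := p / g with hp'def
  set q' : ℤ := q / g with hq'def
  have hpg : p' * g = p := Int.ediv_mul_cancel (Int.gcd_dvd_left p q)
  have hqg : q' * g = q := Int.ediv_mul_cancel (Int.gcd_dvd_right p q)
  have hcop : Int.gcd p' q' = 1 := Int.gcd_div_gcd_div_gcd hgpos
  have hrel : ∀ i < s, p' * a i + q' * (x i - x 0) = 0 := by
    intro i hi
    have hmul : g * (p' * a i + q' * (x i - x 0)) = g * 0 := by
      rw [mul_zero]
      linear_combination (a i) * hpg + (x i - x 0) * hqg + hlinei i hi + hr
    exact mul_left_cancel₀ hgne hmul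
  have hdvd : ∀ i < s, q' ∣ a i := by
    intro i hi
    have h1 : q' ∣ p' * a i := ⟨x 0 - x i, by linarith [hrel i hi]⟩
    have hcop' : IsCoprime q' p' := by
      rw [Int.isCoprime_iff_gcd_eq_one, Int.gcd_comm]
      exact hcop
    exact hcop'.dvd_of_dvd_mul_left h1
  have hdvd1 : q' ∣ 1 := by
    rw [← hgcd]
    exact Finset.dvd_gcd fun i hi => hdvd i (Finset.mem_range.1 hi)
  have hq'2 : q' * q' = 1 := by
    rcases Int.isUnit_iff.1 (isUnit_of_dvd_one hdvd1) with h | h <;> rw [h] <;> ring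
  refine ⟨-(q' * p'), x 0, fun i hi => ?_⟩
  linear_combination q' * hrel i hi - (x i - x 0) * hq'2
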